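/- Let g be a polynomial of degree n ≥ 1 with zeros β₁,…,βₙ (with multiplicity), and let z ∈ ℂ be such that g(z) ≠ 0 and ∑_{i=1}^n 1/(z − βᵢ) = α. Then z = ∑ᵢ λᵢβᵢ + κ·conj(α), where λᵢ = |z−βᵢ|⁻² / ∑ⱼ|z−βⱼ|⁻² and κ = 1 / ∑ⱼ|z−βⱼ|⁻²; in particular the λᵢ are positive and sum to 1, and κ > 0. -/

import Mathlib

open Finset

/-- The conjugation step: z = ∑ λᵢ βᵢ + κ conj α with positive weights summing to 1. -/
theorem takagi_convex_combination (n : ℕ) (hn : 1 ≤ n) (β : Fin n → ℂ) (z α : ℂ)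
    (hz : ∀ i, z ≠ β i) (hα : ∑ i, (z - β i)⁻¹ = α) :
    (∀ i : Fin n, 0 < (‖z - β i‖ ^ 2)⁻¹ / ∑ j, (‖z - β j‖ ^ 2)⁻¹) ∧
    (∑ i, (‖z - β i‖ ^ 2)⁻¹ / ∑ j, (‖z - β j‖ ^ 2)⁻¹) = 1 ∧
    0 < (∑ j, (‖z - β j‖ ^ 2)⁻¹)⁻¹ ∧
    z = (∑ i, (((‖z - β i‖ ^ 2)⁻¹ / ∑ j, (‖z - β j‖ ^ 2)⁻¹ : ℝ) : ℂ) * β i)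
        + (((∑ j, (‖z - β j‖ ^ 2)⁻¹)⁻¹ : ℝ) : ℂ) * (starRingEnd ℂ) α := by
  have hne : ∀ i, z - β i ≠ 0 := fun i => sub_ne_zero.mpr (hz i)
  have ht : ∀ i, 0 < (‖z - β i‖ ^ 2)⁻¹ := fun i => by
    have := norm_pos_iff.mpr (hne i); positivity
  have hS : 0 < ∑ j, (‖z - β j‖ ^ 2)⁻¹ := by
    haveI : Nonempty (Fin n) := Fin.pos_iff_nonempty.mp hn
    exact Finset.sum_pos (fun j _ => ht j) univ_nonempty
  refine ⟨fun i => div_pos (ht i) hS, ?_, inv_pos.mpr hS, ?_⟩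
  · rw [← Finset.sum_div, div_self hS.ne']
  · rw [← hα, map_sum, Finset.mul_sum, ← Finset.sum_add_distrib]
    have key : ∀ i : Fin n,
        (((‖z - β i‖ ^ 2)⁻¹ / ∑ j, (‖z - β j‖ ^ 2)⁻¹ : ℝ) : ℂ) * β i
        + (((∑ j, (‖z - β j‖ ^ 2)⁻¹)⁻¹ : ℝ) : ℂ) * (starRingEnd ℂ) (z - β i)⁻¹
        = (((‖z - β i‖ ^ 2)⁻¹ / ∑ j, (‖z - β j‖ ^ 2)⁻¹ : ℝ) : ℂ) * z := by
      intro i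
      rw [Complex.inv_def, map_mul, Complex.conj_conj]
      simp only [map_inv₀, Complex.conj_ofReal]
      have hnsq : (Complex.normSq (z - β i) : ℂ) ≠ 0 := by
        simpa using (Complex.normSq_pos.mpr (hne i)).ne'
      have h1 : (Complex.normSq (z - β i) : ℝ) = ‖z - β i‖ ^ 2 :=
        (Complex.sq_norm _).symm
      have habs : ((‖z - β i‖ : ℝ) : ℂ) ^ 2 ≠ 0 :=
        pow_ne_zero _ (by exact_mod_cast (norm_pos_iff.mpr (hne i)).ne')
      push_cast [h1]
      have h2 : ((‖z - β i‖ : ℝ) : ℂ) ≠ 0 := by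
        exact_mod_cast (norm_pos_iff.mpr (hne i)).ne'
      have h3 : ((∑ j, (‖z - β j‖ ^ 2)⁻¹ : ℝ) : ℂ) ≠ 0 := by
        exact_mod_cast hS.ne'
      field_simp
      ring
    rw [Finset.sum_congr rfl (fun i _ => key i), ← Finset.sum_mul]
    rw [show (∑ i, (((‖z - β i‖ ^ 2)⁻¹ / ∑ j, (‖z - β j‖ ^ 2)⁻¹ : ℝ) : ℂ))
        = ((∑ i, ((‖z - β i‖ ^ 2)⁻¹ / ∑ j, (‖z - β j‖ ^ 2)⁻¹) : ℝ) : ℂ)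
        from by push_cast; rfl]
    rw [← Finset.sum_div, div_self hS.ne', Complex.ofReal_one, one_mul]
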